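/- Let (Ω, ℱ, P) be a probability space and (x^ν) a sequence of ℝ^n-valued measurable functions with sup_ν |x^ν(ω)| < ∞ almost surely. Then there exists a sequence x̄^ν, with each x̄^ν a (finite) convex combination of {x^μ : μ ≥ ν}, converging almost surely to a measurable ℝ^n-valued function. -/

import Mathlib

open MeasureTheory Filter Finsupp
open scoped ENNReal NNReal

/-- In a Hilbert space, a bounded sequence admits forward convex combinations
converging in norm. -/
theorem forward_convex_tendsto {H : Type*} [NormedAddCommGroup H] [InnerProductSpace ℝ H]
    [CompleteSpace H] (y : ℕ → H) (C : ℝ) (hC : ∀ ν, ‖y ν‖ ≤ C) :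
    ∃ α : ℕ → ℕ →₀ ℝ, (∀ ν k, 0 ≤ α ν k) ∧ (∀ ν k, k < ν → α ν k = 0) ∧
      (∀ ν, (α ν).sum (fun _ a => a) = 1) ∧
      ∃ w : H, Tendsto (fun ν => Finsupp.linearCombination ℝ y (α ν)) atTop (nhds w) := by
  classical
  have hC0 : 0 ≤ C := le_trans (norm_nonneg _) (hC 0)
  set T : (ℕ →₀ ℝ) →ₗ[ℝ] H := Finsupp.linearCombination ℝ y with hT
  set good : ℕ → (ℕ →₀ ℝ) → Prop := fun ν α =>
    (∀ k, 0 ≤ α k) ∧ (∀ k, k < ν → α k = 0) ∧ α.sum (fun _ a => a) = 1 with hgood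
  set S : ℕ → Set ℝ := fun ν => (fun α => ‖T α‖ ^ 2) '' {α | good ν α} with hS
  have hsingle : ∀ ν, good ν (Finsupp.single ν 1) := by
    intro ν
    refine ⟨fun k => ?_, fun k hk => ?_, ?_⟩
    · rw [Finsupp.single_apply]; positivity
    · rw [Finsupp.single_apply, if_neg (by omega)]
    · rw [Finsupp.sum_single_index rfl]
  have hne : ∀ ν, (S ν).Nonempty := fun ν => ⟨_, ⟨Finsupp.single ν 1, hsingle ν, rfl⟩⟩
  have hbdd : ∀ ν, BddBelow (S ν) := by
    intro ν
    refine ⟨0, fun r hr => ?_⟩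
    obtain ⟨β, -, rfl⟩ := hr
    positivity
  set d : ℕ → ℝ := fun ν => sInf (S ν) with hd
  have hmono : Monotone d := by
    intro a b hab
    refine csInf_le_csInf (hbdd a) (hne b) ?_
    rintro r ⟨β, hβ, rfl⟩
    exact ⟨β, ⟨hβ.1, fun k hk => hβ.2.1 k (lt_of_lt_of_le hk hab), hβ.2.2⟩, rfl⟩
  have hdle : ∀ ν, d ν ≤ C ^ 2 := by
    intro ν
    refine le_trans (csInf_le (hbdd ν) ⟨Finsupp.single ν 1, hsingle ν, rfl⟩) ?_
    show ‖T (Finsupp.single ν 1)‖ ^ 2 ≤ C ^ 2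
    have : ‖T (Finsupp.single ν 1)‖ = ‖y ν‖ := by
      rw [hT, Finsupp.linearCombination_single, one_smul]
    rw [this]
    exact pow_le_pow_left₀ (norm_nonneg _) (hC ν) 2
  have hbddA : BddAbove (Set.range d) := ⟨C ^ 2, by rintro r ⟨ν, rfl⟩; exact hdle ν⟩
  set D : ℝ := ⨆ ν, d ν with hD
  have hdD : ∀ ν, d ν ≤ D := fun ν => le_ciSup hbddA ν
  have htendD : Tendsto d atTop (nhds D) := tendsto_atTop_ciSup hmono hbddA
  -- choose near-optimal elements
  have hchoice : ∀ ν : ℕ, ∃ α : ℕ →₀ ℝ, good ν α ∧ ‖T α‖ ^ 2 < d ν + (ν + 1 : ℝ)⁻¹ := by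
    intro ν
    have hpos : (0 : ℝ) < (ν + 1 : ℝ)⁻¹ := by positivity
    obtain ⟨r, hr, hlt⟩ := exists_lt_of_csInf_lt (hne ν) (lt_add_of_pos_right (d ν) hpos)
    obtain ⟨β, hβ, rfl⟩ := hr
    exact ⟨β, hβ, hlt⟩
  choose α hα hαlt using hchoice
  refine ⟨α, fun ν => (hα ν).1, fun ν => (hα ν).2.1, fun ν => (hα ν).2.2, ?_⟩
  -- key estimate
  have key : ∀ N m n : ℕ, N ≤ m → N ≤ n →
      ‖T (α m) - T (α n)‖ ^ 2 ≤ 4 * (D - d N) + 4 * (N + 1 : ℝ)⁻¹ := by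
    intro N m n hm hn
    set β : ℕ →₀ ℝ := (2⁻¹ : ℝ) • α m + (2⁻¹ : ℝ) • α n with hβ
    have hβgood : good N β := by
      refine ⟨fun k => ?_, fun k hk => ?_, ?_⟩
      · simp only [hβ, Finsupp.add_apply, Finsupp.smul_apply, smul_eq_mul]
        have := (hα m).1 k; have := (hα n).1 k; positivity
      · simp only [hβ, Finsupp.add_apply, Finsupp.smul_apply, smul_eq_mul,
          (hα m).2.1 k (lt_of_lt_of_le hk hm), (hα n).2.1 k (lt_of_lt_of_le hk hn)]
        ring
      · have hsum : ∀ γ : ℕ →₀ ℝ, γ.sum (fun _ a => a) = Finsupp.linearCombination ℝ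
            (fun _ : ℕ => (1:ℝ)) γ := by
          intro γ
          rw [Finsupp.linearCombination_apply]
          exact Finsupp.sum_congr (fun k _ => by simp)
        rw [hsum, hβ, map_add, LinearMap.map_smul, LinearMap.map_smul, ← hsum, ← hsum, (hα m).2.2, (hα n).2.2]
        norm_num
    have hdβ : d N ≤ ‖T β‖ ^ 2 := csInf_le (hbdd N) ⟨β, hβgood, rfl⟩
    have hTβ : T β = (2⁻¹ : ℝ) • (T (α m) + T (α n)) := by
      rw [hβ, map_add, LinearMap.map_smul, LinearMap.map_smul, smul_add]
    have hnorm : ‖T (α m) + T (α n)‖ ^ 2 = 4 * ‖T β‖ ^ 2 := by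
      rw [hTβ, norm_smul]
      simp [mul_pow]
      ring
    have hpar := parallelogram_law_with_norm ℝ (T (α m)) (T (α n))
    have h1 : ‖T (α m)‖ ^ 2 < d m + (m + 1 : ℝ)⁻¹ := hαlt m
    have h2 : ‖T (α n)‖ ^ 2 < d n + (n + 1 : ℝ)⁻¹ := hαlt n
    have hεm : (m + 1 : ℝ)⁻¹ ≤ (N + 1 : ℝ)⁻¹ := by
      apply inv_anti₀ (by positivity)
      exact_mod_cast Nat.succ_le_succ hm
    have hεn : (n + 1 : ℝ)⁻¹ ≤ (N + 1 : ℝ)⁻¹ := by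
      apply inv_anti₀ (by positivity)
      exact_mod_cast Nat.succ_le_succ hn
    have hsq : ∀ v : H, ‖v‖ * ‖v‖ = ‖v‖ ^ 2 := fun v => (sq ‖v‖).symm
    nlinarith [hdD m, hdD n, hmono hm, hmono hn, hpar, hsq (T (α m) + T (α n)),
      hsq (T (α m) - T (α n)), hsq (T (α m)), hsq (T (α n))]
  -- Cauchy
  have hcauchy : CauchySeq (fun ν => T (α ν)) := by
    rw [Metric.cauchySeq_iff]
    intro ε hε
    have hlim : Tendsto (fun N : ℕ => 4 * (D - d N) + 4 * (N + 1 : ℝ)⁻¹) atTop (nhds 0) := by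
      have h1 : Tendsto (fun N : ℕ => 4 * (D - d N)) atTop (nhds 0) := by
        have := (tendsto_const_nhds (x := D)).sub htendD
        simpa using this.const_mul 4
      have h2 : Tendsto (fun N : ℕ => 4 * (N + 1 : ℝ)⁻¹) atTop (nhds 0) := by
        have := tendsto_one_div_add_atTop_nhds_zero_nat (𝕜 := ℝ)
        simp only [one_div] at this
        simpa using this.const_mul 4
      simpa using h1.add h2
    have hev : ∀ᶠ N in atTop, 4 * (D - d N) + 4 * (N + 1 : ℝ)⁻¹ < ε ^ 2 := by
      refine hlim.eventually (Filter.Tendsto.eventually_lt_const ?_ tendsto_id)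
      positivity
    obtain ⟨N, hN⟩ := hev.exists
    refine ⟨N, fun m hm n hn => ?_⟩
    have hkey := key N m n hm hn
    rw [dist_eq_norm]
    have h0 : (0:ℝ) ≤ ε := le_of_lt hε
    refine lt_of_pow_lt_pow_left₀ 2 h0 (lt_of_le_of_lt hkey hN)
  obtain ⟨w, hw⟩ := cauchySeq_tendsto_of_complete hcauchy
  exact ⟨w, hw⟩

private lemma euc_norm_le {n : ℕ} (v : Fin n → ℝ) :
    ‖(WithLp.equiv 2 (Fin n → ℝ)).symm v‖ ≤ Real.sqrt n * ‖v‖ := by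
  rw [EuclideanSpace.norm_eq]
  have h1 : ∀ i, ‖(WithLp.equiv 2 (Fin n → ℝ)).symm v i‖ ^ 2 ≤ ‖v‖ ^ 2 := by
    intro i
    have h := norm_le_pi_norm v i
    have : (WithLp.equiv 2 (Fin n → ℝ)).symm v i = v i := rfl
    rw [this]
    exact pow_le_pow_left₀ (norm_nonneg _) h 2
  have h2 : ∑ i, ‖(WithLp.equiv 2 (Fin n → ℝ)).symm v i‖ ^ 2 ≤ (n : ℝ) * ‖v‖ ^ 2 := by
    calc ∑ i, ‖(WithLp.equiv 2 (Fin n → ℝ)).symm v i‖ ^ 2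
        ≤ ∑ _i : Fin n, ‖v‖ ^ 2 := Finset.sum_le_sum fun i _ => h1 i
      _ = (n : ℝ) * ‖v‖ ^ 2 := by simp [mul_comm]
  calc Real.sqrt (∑ i, ‖(WithLp.equiv 2 (Fin n → ℝ)).symm v i‖ ^ 2)
      ≤ Real.sqrt ((n : ℝ) * ‖v‖ ^ 2) := Real.sqrt_le_sqrt h2
    _ = Real.sqrt n * ‖v‖ := by
        rw [Real.sqrt_mul (by positivity), Real.sqrt_sq (norm_nonneg _)]

/-- Komlós-type theorem, a.s.-bounded case: if `(x^ν)` is a sequence of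
measurable `ℝ^n`-valued functions with `sup_ν |x^ν(ω)| < ∞` a.s., then there are forward
convex combinations `x̄^ν ∈ co{x^μ : μ ≥ ν}` converging a.s. to a measurable function. -/
theorem stmt11 {Ω : Type*} [MeasurableSpace Ω] (μ : Measure Ω) [IsProbabilityMeasure μ]
    (n : ℕ) (x : ℕ → Ω → (Fin n → ℝ)) (hmeas : ∀ ν, Measurable (x ν))
    (hbd : ∀ᵐ ω ∂μ, ∃ M : ℝ, ∀ ν, ‖x ν ω‖ ≤ M) :
    ∃ α : ℕ → (ℕ →₀ ℝ), (∀ ν k, 0 ≤ α ν k) ∧ (∀ ν k, k < ν → α ν k = 0) ∧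
      (∀ ν, (α ν).sum (fun _ a => a) = 1) ∧
      ∃ z : Ω → (Fin n → ℝ), Measurable z ∧
        ∀ᵐ ω ∂μ, Tendsto (fun ν => (α ν).sum (fun k a => a • x k ω)) atTop (nhds (z ω)) := by
  classical
  set E := EuclideanSpace ℝ (Fin n) with hE
  set x' : ℕ → Ω → E := fun ν ω => (WithLp.equiv 2 (Fin n → ℝ)).symm (x ν ω) with hx'
  have hx'meas : ∀ ν, Measurable (x' ν) := fun ν => (WithLp.measurable_toLp 2 _).comp (hmeas ν)
  -- the normalizing weight
  set B : Ω → ℝ≥0∞ := fun ω => ⨆ ν, (‖x ν ω‖₊ : ℝ≥0∞) with hBdef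
  have hBmeas : Measurable B :=
    Measurable.iSup (fun ν => (hmeas ν).nnnorm.coe_nnreal_ennreal)
  have hBfin : ∀ᵐ ω ∂μ, B ω < ⊤ := by
    filter_upwards [hbd] with ω hM
    obtain ⟨M, hM⟩ := hM
    refine lt_of_le_of_lt (iSup_le (a := ENNReal.ofReal M) fun ν => ?_) ENNReal.ofReal_lt_top
    rw [← enorm_eq_nnnorm, ← ofReal_norm]
    exact ENNReal.ofReal_le_ofReal (hM ν)
  set g : Ω → ℝ := fun ω => ((1 + B ω)⁻¹).toReal with hgdef
  have hgmeas : Measurable g := (measurable_const.add hBmeas).inv.ennreal_toReal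
  have hg0 : ∀ ω, 0 ≤ g ω := fun ω => ENNReal.toReal_nonneg
  have hgpos : ∀ ω, B ω < ⊤ → 0 < g ω := by
    intro ω hω
    apply ENNReal.toReal_pos
    · simp only [ne_eq, ENNReal.inv_eq_zero]
      exact (ENNReal.add_lt_top.2 ⟨ENNReal.one_lt_top, hω⟩).ne
    · exact ENNReal.inv_ne_top.2 (by simp)
  -- key bound : g ω * ‖x ν ω‖ ≤ 1
  have hgb : ∀ ω ν, g ω * ‖x ν ω‖ ≤ 1 := by
    intro ω ν
    by_cases hω : B ω = ⊤
    · have : g ω = 0 := by simp [hgdef, hω]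
      simp [this]
    · have hxB : ‖x ν ω‖ ≤ (B ω).toReal := by
        have h1 : (‖x ν ω‖₊ : ℝ≥0∞) ≤ B ω := le_iSup (fun ν => (‖x ν ω‖₊ : ℝ≥0∞)) ν
        have := ENNReal.toReal_mono hω h1
        simpa using this
      have h2 : g ω * ‖x ν ω‖ ≤ g ω * (B ω).toReal :=
        mul_le_mul_of_nonneg_left hxB (hg0 ω)
      refine h2.trans ?_
      rw [hgdef, ← ENNReal.toReal_mul]
      have h3 : (1 + B ω)⁻¹ * B ω ≤ 1 := by
        calc (1 + B ω)⁻¹ * B ω ≤ (1 + B ω)⁻¹ * (1 + B ω) :=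
              mul_le_mul_right le_add_self _
          _ ≤ 1 := ENNReal.inv_mul_le_one _
      calc ((1 + B ω)⁻¹ * B ω).toReal ≤ (1 : ℝ≥0∞).toReal :=
            ENNReal.toReal_mono (by simp) h3
        _ = 1 := by simp
  -- normalized functions
  set y' : ℕ → Ω → E := fun ν ω => g ω • x' ν ω with hy'
  have hy'meas : ∀ ν, Measurable (y' ν) := fun ν => hgmeas.smul (hx'meas ν)
  have hy'bd : ∀ ν ω, ‖y' ν ω‖ ≤ Real.sqrt n := by
    intro ν ω
    calc ‖g ω • x' ν ω‖ = |g ω| * ‖x' ν ω‖ := by rw [norm_smul, Real.norm_eq_abs]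
      _ = g ω * ‖x' ν ω‖ := by rw [abs_of_nonneg (hg0 ω)]
      _ ≤ g ω * (Real.sqrt n * ‖x ν ω‖) :=
          mul_le_mul_of_nonneg_left (euc_norm_le _) (hg0 ω)
      _ = Real.sqrt n * (g ω * ‖x ν ω‖) := by ring
      _ ≤ Real.sqrt n * 1 := mul_le_mul_of_nonneg_left (hgb ω ν) (Real.sqrt_nonneg _)
      _ = Real.sqrt n := mul_one _
  have hmem : ∀ ν, MemLp (y' ν) 2 μ := fun ν =>
    MemLp.of_bound (hy'meas ν).aestronglyMeasurable (Real.sqrt n)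
      (Eventually.of_forall (hy'bd ν))
  set yL : ℕ → Lp E 2 μ := fun ν => (hmem ν).toLp (y' ν) with hyL
  have hyLbd : ∀ ν, ‖yL ν‖ ≤
      (measureUnivNNReal μ : ℝ) ^ ((2 : ℝ≥0∞).toReal)⁻¹ * Real.sqrt n := by
    intro ν
    refine Lp.norm_le_of_ae_bound (Real.sqrt_nonneg _) ?_
    filter_upwards [(hmem ν).coeFn_toLp] with ω hω
    rw [hω]; exact hy'bd ν ω
  obtain ⟨α, hα1, hα2, hα3, w, hw⟩ := forward_convex_tendsto yL _ hyLbd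
  -- identification of the convex combinations
  have hsum : ∀ (s : Finset ℕ) (c : ℕ → ℝ),
      (⇑(∑ k ∈ s, c k • yL k) : Ω → E) =ᵐ[μ] fun ω => ∑ k ∈ s, c k • y' k ω := by
    intro s c
    induction s using Finset.induction with
    | empty => simp only [Finset.sum_empty]; exact Lp.coeFn_zero E 2 μ
    | @insert a s ha ih =>
      filter_upwards [Lp.coeFn_add (c a • yL a) (∑ k ∈ s, c k • yL k),
        Lp.coeFn_smul (c a) (yL a), (hmem a).coeFn_toLp, ih] with ω h1 h2 h3 h4
      rw [Finset.sum_insert ha, h1, Finset.sum_insert ha, ← h4]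
      simp only [Pi.add_apply]
      rw [h2]
      simp [hyL, h3]
  have hae : ∀ ν, (⇑(Finsupp.linearCombination ℝ yL (α ν)) : Ω → E) =ᵐ[μ]
      fun ω => (α ν).sum fun k a => a • y' k ω := by
    intro ν
    have h1 : Finsupp.linearCombination ℝ yL (α ν) = ∑ k ∈ (α ν).support, (α ν) k • yL k := by
      rw [Finsupp.linearCombination_apply]; rfl
    rw [h1]
    filter_upwards [hsum (α ν).support (fun k => (α ν) k)] with ω hω
    rw [hω]; rfl
  -- convergence in measure and extraction of a.e. convergent subsequence
  have htim : TendstoInMeasure μ (fun ν => ⇑(Finsupp.linearCombination ℝ yL (α ν))) atTop ⇑w :=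
    tendstoInMeasure_of_tendsto_Lp hw
  obtain ⟨ns, hns, hns_ae⟩ := htim.exists_seq_tendsto_ae
  -- the final data
  refine ⟨fun ν => α (ns ν), fun ν k => hα1 (ns ν) k, ?_, fun ν => hα3 (ns ν), ?_⟩
  · intro ν k hk
    exact hα2 (ns ν) k (lt_of_lt_of_le hk (hns.le_apply))
  · set z : Ω → (Fin n → ℝ) := fun ω => (g ω)⁻¹ • (WithLp.equiv 2 (Fin n → ℝ)) (w ω) with hz
    have hzmeas : Measurable z := by
      rw [measurable_pi_iff]
      intro i
      apply Measurable.mul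
      · exact hgmeas.inv
      · exact (measurable_pi_apply i).comp ((WithLp.measurable_ofLp 2 _).comp (Lp.stronglyMeasurable w).measurable)
    refine ⟨z, hzmeas, ?_⟩
    have haeall : ∀ᵐ ω ∂μ, ∀ ν, (⇑(Finsupp.linearCombination ℝ yL (α ν)) : Ω → E) ω =
        (α ν).sum fun k a => a • y' k ω := by
      rw [ae_all_iff]; exact hae
    filter_upwards [hns_ae, hBfin, haeall] with ω h1 h2 h3
    have hgw : 0 < g ω := hgpos ω h2
    -- pull out g ω from convex combinations
    have hcomm : ∀ m : ℕ, ((α m).sum fun k a => a • y' k ω)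
        = g ω • ((α m).sum fun k a => a • x' k ω) := by
      intro m
      show (∑ k ∈ (α m).support, (α m) k • y' k ω)
          = g ω • ∑ k ∈ (α m).support, (α m) k • x' k ω
      rw [Finset.smul_sum]
      refine Finset.sum_congr rfl fun k _ => ?_
      rw [smul_comm]
    have h1' : Tendsto (fun i => g ω • ((α (ns i)).sum fun k a => a • x' k ω)) atTop
        (nhds (w ω)) := by
      refine h1.congr fun i => ?_
      rw [h3 (ns i), hcomm (ns i)]
    have h4 : Tendsto (fun i => (α (ns i)).sum fun k a => a • x' k ω) atTop
        (nhds ((g ω)⁻¹ • w ω)) := by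
      have := h1'.const_smul (g ω)⁻¹
      refine this.congr fun i => ?_
      rw [inv_smul_smul₀ (ne_of_gt hgw)]
    -- transfer to the product topology
    have h5 := ((PiLp.continuous_ofLp 2 (fun _ : Fin n => ℝ)).tendsto
      ((g ω)⁻¹ • w ω)).comp h4
    refine h5.congr' ?_ |>.mono_right ?_
    · exact Eventually.of_forall fun i => by simp only [Function.comp_apply, Finsupp.sum, x']; rw [WithLp.ofLp_sum]; exact Finset.sum_congr rfl fun k _ => rfl
    · rw [hz]
      have : WithLp.ofLp ((g ω)⁻¹ • w ω)
          = (g ω)⁻¹ • (WithLp.equiv 2 (Fin n → ℝ)) (w ω) := rfl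
      rw [this]
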